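/- Let ρ be a state on ℂ^d and A = (A_1, …, A_m) a POVM with all elements nonzero. Define S(C) = (ρC + Cρ)/2, which is invertible. Then for every d×d complex matrix C: Σ_j |tr(A_j C)|²/tr(ρ A_j) ≤ Re ⟪C, S⁻¹(C)⟫, Σ_j |tr(A_j C)|²/tr(ρ A_j) ≤ tr(Cᴴ ρ⁻¹ C), and Σ_j |tr(A_j C)|²/tr(ρ A_j) ≤ tr(Cᴴ C ρ⁻¹) (i.e., the Fisher superoperator F(ρ,A) is dominated by each of the inverse superoperators S⁻¹, L⁻¹, R⁻¹ in the sense of quadratic forms). -/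

import Mathlib

open Matrix
open scoped ComplexOrder
open scoped MatrixOrder

def IsPOVM {d m : ℕ} (A : Fin m → Matrix (Fin d) (Fin d) ℂ) : Prop :=
  (∀ j, (A j).PosSemidef) ∧ ∑ j, A j = 1

noncomputable def toE {d : ℕ} (X : Matrix (Fin d) (Fin d) ℂ) : EuclideanSpace ℂ (Fin d × Fin d) :=
  WithLp.toLp 2 (fun p : Fin d × Fin d => X p.1 p.2)

lemma inner_toE {d : ℕ} (X Y : Matrix (Fin d) (Fin d) ℂ) :
    (inner ℂ (toE X) (toE Y) : ℂ) = (Xᴴ * Y).trace := by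
  simp only [PiLp.inner_apply, RCLike.inner_apply, toE, PiLp.toLp_apply, Matrix.trace, Matrix.diag,
    Matrix.mul_apply, Matrix.conjTranspose_apply]
  rw [Fintype.sum_prod_type, Finset.sum_comm]
  simp only [mul_comm, Complex.star_def]

lemma norm_toE_sq {d : ℕ} (X : Matrix (Fin d) (Fin d) ℂ) :
    ‖toE X‖ ^ 2 = ((Xᴴ * X).trace).re := by
  rw [← inner_toE]
  exact (inner_self_eq_norm_sq (𝕜 := ℂ) (toE X)).symm

lemma toE_eq_zero {d : ℕ} {X : Matrix (Fin d) (Fin d) ℂ} (h : toE X = 0) : X = 0 := by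
  ext i j
  have := congrArg (fun v => v (i, j)) h
  simpa [toE] using this

lemma cs_trace' {d : ℕ} (X Y : Matrix (Fin d) (Fin d) ℂ) :
    ‖(Xᴴ * Y).trace‖ ≤ ‖toE X‖ * ‖toE Y‖ := by
  have h := norm_inner_le_norm (𝕜 := ℂ) (toE X) (toE Y)
  rwa [inner_toE] at h

lemma cs_trace {d : ℕ} (X Y : Matrix (Fin d) (Fin d) ℂ) :
    ‖(Xᴴ * Y).trace‖ ^ 2 ≤ ((Xᴴ * X).trace).re * ((Yᴴ * Y).trace).re := by
  have h := cs_trace' X Y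
  calc ‖(Xᴴ * Y).trace‖ ^ 2
      ≤ (‖toE X‖ * ‖toE Y‖) ^ 2 := by
        have := norm_nonneg ((Xᴴ * Y).trace)
        nlinarith
    _ = ‖toE X‖^2 * ‖toE Y‖^2 := by ring
    _ = _ := by rw [norm_toE_sq, norm_toE_sq]

set_option maxHeartbeats 2000000 in
theorem stmt_9 {d m : ℕ}
    (ρ : Matrix (Fin d) (Fin d) ℂ) (hρ : ρ.PosDef) (hρtr : ρ.trace = 1)
    (A : Fin m → Matrix (Fin d) (Fin d) ℂ)
    (hA : IsPOVM A) (hA0 : ∀ j, A j ≠ 0)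
    (C : Matrix (Fin d) (Fin d) ℂ) :
    (∀ T : Matrix (Fin d) (Fin d) ℂ →ₗ[ℂ] Matrix (Fin d) (Fin d) ℂ,
      (∀ X, (2⁻¹ : ℂ) • (ρ * T X + T X * ρ) = X) →
      ∑ j, ‖(A j * C).trace‖ ^ 2 / ((ρ * A j).trace).re ≤
        ((Cᴴ * T C).trace).re) ∧
    (∑ j, ‖(A j * C).trace‖ ^ 2 / ((ρ * A j).trace).re ≤
      ((Cᴴ * (ρ⁻¹ * C)).trace).re) ∧
    (∑ j, ‖(A j * C).trace‖ ^ 2 / ((ρ * A j).trace).re ≤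
      ((Cᴴ * (C * ρ⁻¹)).trace).re) := by
  obtain ⟨hpsd, hsum⟩ := hA
  have hρs := hρ.posSemidef
  set s : Matrix (Fin d) (Fin d) ℂ := CFC.sqrt ρ with hs_def
  have hsH : sᴴ = s := (CFC.sqrt_nonneg ρ).posSemidef.1
  have hss : s * s = ρ := CFC.sqrt_mul_sqrt_self ρ hρs.nonneg
  have hdet : IsUnit s.det := by
    have h1 : s.det * s.det = ρ.det := by rw [← Matrix.det_mul, hss]
    have h2 : IsUnit ρ.det := (Matrix.isUnit_iff_isUnit_det ρ).1 hρ.isUnit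
    rw [← h1] at h2
    exact isUnit_of_mul_isUnit_left h2
  set t : Matrix (Fin d) (Fin d) ℂ := s⁻¹ with ht_def
  have htH : tᴴ = t := by rw [ht_def, Matrix.conjTranspose_nonsing_inv, hsH]
  have hst : s * t = 1 := Matrix.mul_nonsing_inv s hdet
  have hts : t * s = 1 := Matrix.nonsing_inv_mul s hdet
  have htt : t * t = ρ⁻¹ := by rw [← hss, Matrix.mul_inv_rev]
  set B : Fin m → Matrix (Fin d) (Fin d) ℂ := fun j => CFC.sqrt (A j) with hB_def
  have hBH : ∀ j, (B j)ᴴ = B j := fun j => (CFC.sqrt_nonneg (A j)).posSemidef.1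
  have hBB : ∀ j, B j * B j = A j := fun j => CFC.sqrt_mul_sqrt_self (A j) (hpsd j).nonneg
  -- right-assoc cancellation helpers
  have hssZ : ∀ Z : Matrix (Fin d) (Fin d) ℂ, s * (s * Z) = ρ * Z := by
    intro Z; rw [← Matrix.mul_assoc, hss]
  have hstZ : ∀ Z : Matrix (Fin d) (Fin d) ℂ, s * (t * Z) = Z := by
    intro Z; rw [← Matrix.mul_assoc, hst, Matrix.one_mul]
  have htsZ : ∀ Z : Matrix (Fin d) (Fin d) ℂ, t * (s * Z) = Z := by
    intro Z; rw [← Matrix.mul_assoc, hts, Matrix.one_mul]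
  have httZ : ∀ Z : Matrix (Fin d) (Fin d) ℂ, t * (t * Z) = ρ⁻¹ * Z := by
    intro Z; rw [← Matrix.mul_assoc, htt]
  have hBBZ : ∀ j, ∀ Z : Matrix (Fin d) (Fin d) ℂ, B j * (B j * Z) = A j * Z := by
    intro j Z; rw [← Matrix.mul_assoc, hBB]
  -- trace identities
  have I1 : ∀ j, (((s * B j)ᴴ) * (s * B j)).trace = (ρ * A j).trace := by
    intro j
    have e : (s * B j)ᴴ * (s * B j) = B j * (ρ * B j) := by
      simp only [conjTranspose_mul, hsH, hBH, Matrix.mul_assoc, hssZ]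
    rw [e, Matrix.trace_mul_comm (B j) (ρ * B j)]
    congr 1
    simp only [Matrix.mul_assoc, hBB]
  have I2 : ∀ j, (((B j * s)ᴴ) * (B j * s)).trace = (ρ * A j).trace := by
    intro j
    have e : (B j * s)ᴴ * (B j * s) = s * (A j * s) := by
      simp only [conjTranspose_mul, hsH, hBH, Matrix.mul_assoc, hBBZ]
    rw [e, Matrix.trace_mul_comm s (A j * s), Matrix.trace_mul_comm ρ (A j)]
    congr 1
    simp only [Matrix.mul_assoc, hss]
  have I3 : ∀ j, (((s * B j)ᴴ) * (t * (C * B j))).trace = (A j * C).trace := by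
    intro j
    have e : (s * B j)ᴴ * (t * (C * B j)) = B j * (C * B j) := by
      simp only [conjTranspose_mul, hsH, hBH, Matrix.mul_assoc, hstZ]
    rw [e, Matrix.trace_mul_comm (B j) (C * B j), Matrix.trace_mul_comm (A j) C]
    congr 1
    simp only [Matrix.mul_assoc, hBB]
  have I4 : ∀ j, (((B j * s)ᴴ) * (B j * (C * t))).trace = (A j * C).trace := by
    intro j
    have e : (B j * s)ᴴ * (B j * (C * t)) = s * (A j * (C * t)) := by
      simp only [conjTranspose_mul, hsH, hBH, Matrix.mul_assoc, hBBZ]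
    rw [e, Matrix.trace_mul_comm s (A j * (C * t))]
    congr 1
    simp only [Matrix.mul_assoc, hts, Matrix.mul_one]
  have I5 : ∀ j, (((t * (C * B j))ᴴ) * (t * (C * B j))).trace
      = (A j * (Cᴴ * (ρ⁻¹ * C))).trace := by
    intro j
    have e : (t * (C * B j))ᴴ * (t * (C * B j)) = B j * (Cᴴ * (ρ⁻¹ * (C * B j))) := by
      simp only [conjTranspose_mul, htH, hBH, Matrix.mul_assoc, httZ]
    rw [e, Matrix.trace_mul_comm (B j) (Cᴴ * (ρ⁻¹ * (C * B j))),
      Matrix.trace_mul_comm (A j) (Cᴴ * (ρ⁻¹ * C))]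
    congr 1
    simp only [Matrix.mul_assoc, hBB]
  have I6 : ∀ j, (((B j * (C * t))ᴴ) * (B j * (C * t))).trace
      = (A j * (C * (ρ⁻¹ * Cᴴ))).trace := by
    intro j
    have e : (B j * (C * t))ᴴ * (B j * (C * t)) = t * (Cᴴ * (A j * (C * t))) := by
      simp only [conjTranspose_mul, htH, hBH, Matrix.mul_assoc, hBBZ]
    rw [e, Matrix.trace_mul_comm t (Cᴴ * (A j * (C * t)))]
    have e2 : Cᴴ * (A j * (C * t)) * t = Cᴴ * (A j * (C * ρ⁻¹)) := by
      simp only [Matrix.mul_assoc, htt]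
    rw [e2, Matrix.trace_mul_comm Cᴴ (A j * (C * ρ⁻¹))]
    congr 1
    simp only [Matrix.mul_assoc]
  have I7 : ∀ j (D : Matrix (Fin d) (Fin d) ℂ),
      (((s * B j)ᴴ) * (s * (D * B j))).trace = (A j * (ρ * D)).trace := by
    intro j D
    have e : (s * B j)ᴴ * (s * (D * B j)) = B j * (ρ * (D * B j)) := by
      simp only [conjTranspose_mul, hsH, hBH, Matrix.mul_assoc, hssZ]
    rw [e, Matrix.trace_mul_comm (B j) (ρ * (D * B j)),
      Matrix.trace_mul_comm (A j) (ρ * D)]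
    congr 1
    simp only [Matrix.mul_assoc, hBB]
  have I8 : ∀ j (D : Matrix (Fin d) (Fin d) ℂ),
      (((B j * s)ᴴ) * (B j * (D * s))).trace = (A j * (D * ρ)).trace := by
    intro j D
    have e : (B j * s)ᴴ * (B j * (D * s)) = s * (A j * (D * s)) := by
      simp only [conjTranspose_mul, hsH, hBH, Matrix.mul_assoc, hBBZ]
    rw [e, Matrix.trace_mul_comm s (A j * (D * s))]
    congr 1
    simp only [Matrix.mul_assoc, hss]
  have I9 : ∀ j (D : Matrix (Fin d) (Fin d) ℂ),
      (((s * (D * B j))ᴴ) * (s * (D * B j))).trace = (A j * (Dᴴ * (ρ * D))).trace := by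
    intro j D
    have e : (s * (D * B j))ᴴ * (s * (D * B j)) = B j * (Dᴴ * (ρ * (D * B j))) := by
      simp only [conjTranspose_mul, hsH, hBH, Matrix.mul_assoc, hssZ]
    rw [e, Matrix.trace_mul_comm (B j) (Dᴴ * (ρ * (D * B j))),
      Matrix.trace_mul_comm (A j) (Dᴴ * (ρ * D))]
    congr 1
    simp only [Matrix.mul_assoc, hBB]
  have I10 : ∀ j (D : Matrix (Fin d) (Fin d) ℂ),
      (((B j * (D * s))ᴴ) * (B j * (D * s))).trace = (A j * (D * (ρ * Dᴴ))).trace := by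
    intro j D
    have e : (B j * (D * s))ᴴ * (B j * (D * s)) = s * (Dᴴ * (A j * (D * s))) := by
      simp only [conjTranspose_mul, hsH, hBH, Matrix.mul_assoc, hBBZ]
    rw [e, Matrix.trace_mul_comm s (Dᴴ * (A j * (D * s)))]
    have e2 : Dᴴ * (A j * (D * s)) * s = Dᴴ * (A j * (D * ρ)) := by
      simp only [Matrix.mul_assoc, hss]
    rw [e2, Matrix.trace_mul_comm Dᴴ (A j * (D * ρ))]
    congr 1
    simp only [Matrix.mul_assoc]
  -- denominators
  have hXXre : ∀ j, ((ρ * A j).trace).re = ‖toE (s * B j)‖ ^ 2 := by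
    intro j; rw [norm_toE_sq, I1 j]
  have hden : ∀ j, 0 < ((ρ * A j).trace).re := by
    intro j
    rw [hXXre j]
    have hne : s * B j ≠ 0 := by
      intro h
      apply hA0 j
      have h2 := congrArg (fun M => t * M) h
      simp only [htsZ, mul_zero] at h2
      rw [← hBB j, h2, Matrix.mul_zero]
    have hne2 : toE (s * B j) ≠ 0 := fun h => hne (toE_eq_zero h)
    exact pow_pos (norm_pos_iff.mpr hne2) 2
  -- sum of traces against the POVM
  have hsumtr : ∀ Z : Matrix (Fin d) (Fin d) ℂ,
      ∑ j, ((A j * Z).trace).re = (Z.trace).re := by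
    intro Z
    have h : ∑ j, (A j * Z).trace = Z.trace := by
      rw [← Matrix.trace_sum, ← Finset.sum_mul, hsum, Matrix.one_mul]
    rw [← Complex.re_sum, h]
  -- Cauchy–Schwarz key step
  have key : ∀ j (X Y : Matrix (Fin d) (Fin d) ℂ),
      (Xᴴ * X).trace = (ρ * A j).trace → (Xᴴ * Y).trace = (A j * C).trace →
      ‖(A j * C).trace‖ ^ 2 / ((ρ * A j).trace).re ≤ ((Yᴴ * Y).trace).re := by
    intro j X Y hX hY
    rw [div_le_iff₀ (hden j)]
    calc ‖(A j * C).trace‖ ^ 2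
        = ‖(Xᴴ * Y).trace‖ ^ 2 := by rw [hY]
      _ ≤ ((Xᴴ * X).trace).re * ((Yᴴ * Y).trace).re := cs_trace X Y
      _ = ((Yᴴ * Y).trace).re * ((ρ * A j).trace).re := by rw [hX]; ring
  refine ⟨?_, ?_, ?_⟩
  · -- part 1 : S⁻¹ bound
    intro T hT
    set D : Matrix (Fin d) (Fin d) ℂ := T C with hD_def
    have hC : (2⁻¹ : ℂ) • (ρ * D + D * ρ) = C := hT C
    have hnorm_eq : ∀ j, ‖toE (B j * s)‖ = ‖toE (s * B j)‖ := by
      intro j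
      have h1 : ‖toE (B j * s)‖ ^ 2 = ‖toE (s * B j)‖ ^ 2 := by
        rw [norm_toE_sq, norm_toE_sq, I1, I2]
      exact (sq_eq_sq₀ (norm_nonneg _) (norm_nonneg _)).mp h1
    have htr : ∀ j, (A j * C).trace
        = 2⁻¹ * ((A j * (ρ * D)).trace + (A j * (D * ρ)).trace) := by
      intro j
      rw [← hC, Matrix.mul_smul, Matrix.mul_add, Matrix.trace_smul, Matrix.trace_add,
        smul_eq_mul]
    have habs2 : ‖(2⁻¹ : ℂ)‖ = 2⁻¹ := by
      rw [show (2⁻¹ : ℂ) = ((2⁻¹ : ℝ) : ℂ) by norm_num, Complex.norm_real]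
      norm_num
    have habs : ∀ j, ‖(A j * C).trace‖
        ≤ 2⁻¹ * (‖toE (s * B j)‖ * ‖toE (s * (D * B j))‖
            + ‖toE (s * B j)‖ * ‖toE (B j * (D * s))‖) := by
      intro j
      rw [htr j, norm_mul, habs2]
      have h1 : ‖(A j * (ρ * D)).trace‖
          ≤ ‖toE (s * B j)‖ * ‖toE (s * (D * B j))‖ := by
        rw [← I7 j D]; exact cs_trace' _ _
      have h2 : ‖(A j * (D * ρ)).trace‖
          ≤ ‖toE (s * B j)‖ * ‖toE (B j * (D * s))‖ := by
        rw [← I8 j D, ← hnorm_eq j]; exact cs_trace' _ _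
      have h3 := norm_add_le ((A j * (ρ * D)).trace) ((A j * (D * ρ)).trace)
      have h4 : (0:ℝ) ≤ 2⁻¹ := by norm_num
      nlinarith
    have hterm : ∀ j, ‖(A j * C).trace‖ ^ 2 / ((ρ * A j).trace).re
        ≤ 2⁻¹ * (‖toE (s * (D * B j))‖ ^ 2 + ‖toE (B j * (D * s))‖ ^ 2) := by
      intro j
      rw [div_le_iff₀ (hden j), hXXre j]
      have h1 := habs j
      have h0 := norm_nonneg ((A j * C).trace)
      have h2 := pow_le_pow_left₀ h0 h1 2
      set u := ‖toE (s * (D * B j))‖ with hu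
      set v := ‖toE (B j * (D * s))‖ with hv
      set w := ‖toE (s * B j)‖ with hw
      have hu0 : 0 ≤ u := norm_nonneg _
      have hv0 : 0 ≤ v := norm_nonneg _
      have hw0 : 0 ≤ w := norm_nonneg _
      nlinarith [sq_nonneg (w * u - w * v), sq_nonneg (u - v), sq_nonneg w,
        mul_nonneg (sq_nonneg w) (sq_nonneg (u - v))]
    have hre : ∀ z : ℂ, ((2⁻¹ : ℂ) * z).re = 2⁻¹ * z.re := by
      intro z
      rw [show (2⁻¹ : ℂ) = ((2⁻¹ : ℝ) : ℂ) by norm_num]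
      simp
    have hRHS : ((Cᴴ * D).trace).re
        = 2⁻¹ * (((Dᴴ * (ρ * D)).trace).re + ((D * (ρ * Dᴴ)).trace).re) := by
      have hCH : Cᴴ = (2⁻¹ : ℂ) • (Dᴴ * ρ + ρ * Dᴴ) := by
        rw [← hC, conjTranspose_smul, conjTranspose_add, conjTranspose_mul,
          conjTranspose_mul, hρ.1.eq]
        congr 1
        simp [Complex.star_def]
      have h : (Cᴴ * D).trace
          = 2⁻¹ * ((Dᴴ * (ρ * D)).trace + ((ρ * Dᴴ) * D).trace) := by
        rw [hCH, Matrix.smul_mul, Matrix.add_mul, Matrix.trace_smul, Matrix.trace_add,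
          smul_eq_mul, Matrix.mul_assoc]
      rw [h, Matrix.trace_mul_comm (ρ * Dᴴ) D, hre, Complex.add_re]
    calc ∑ j, ‖(A j * C).trace‖ ^ 2 / ((ρ * A j).trace).re
        ≤ ∑ j, 2⁻¹ * (‖toE (s * (D * B j))‖ ^ 2 + ‖toE (B j * (D * s))‖ ^ 2) :=
          Finset.sum_le_sum fun j _ => hterm j
      _ = 2⁻¹ * ((∑ j, ‖toE (s * (D * B j))‖ ^ 2) + ∑ j, ‖toE (B j * (D * s))‖ ^ 2) := by
          rw [← Finset.mul_sum, Finset.sum_add_distrib]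
      _ = 2⁻¹ * (((Dᴴ * (ρ * D)).trace).re + ((D * (ρ * Dᴴ)).trace).re) := by
          congr 1
          congr 1
          · calc ∑ j, ‖toE (s * (D * B j))‖ ^ 2
                = ∑ j, ((A j * (Dᴴ * (ρ * D))).trace).re := by
                  refine Finset.sum_congr rfl fun j _ => ?_
                  rw [norm_toE_sq, I9 j D]
              _ = _ := hsumtr _
          · calc ∑ j, ‖toE (B j * (D * s))‖ ^ 2
                = ∑ j, ((A j * (D * (ρ * Dᴴ))).trace).re := by
                  refine Finset.sum_congr rfl fun j _ => ?_
                  rw [norm_toE_sq, I10 j D]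
              _ = _ := hsumtr _
      _ = ((Cᴴ * D).trace).re := hRHS.symm
  · -- part 2 : L⁻¹ bound
    calc ∑ j, ‖(A j * C).trace‖ ^ 2 / ((ρ * A j).trace).re
        ≤ ∑ j, (((t * (C * B j))ᴴ * (t * (C * B j))).trace).re :=
          Finset.sum_le_sum fun j _ => key j (s * B j) (t * (C * B j)) (I1 j) (I3 j)
      _ = ∑ j, ((A j * (Cᴴ * (ρ⁻¹ * C))).trace).re := by
          refine Finset.sum_congr rfl fun j _ => ?_
          rw [I5 j]
      _ = ((Cᴴ * (ρ⁻¹ * C)).trace).re := hsumtr _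
  · -- part 3 : R⁻¹ bound
    calc ∑ j, ‖(A j * C).trace‖ ^ 2 / ((ρ * A j).trace).re
        ≤ ∑ j, (((B j * (C * t))ᴴ * (B j * (C * t))).trace).re :=
          Finset.sum_le_sum fun j _ => key j (B j * s) (B j * (C * t)) (I2 j) (I4 j)
      _ = ∑ j, ((A j * (C * (ρ⁻¹ * Cᴴ))).trace).re := by
          refine Finset.sum_congr rfl fun j _ => ?_
          rw [I6 j]
      _ = ((C * (ρ⁻¹ * Cᴴ)).trace).re := hsumtr _
      _ = ((Cᴴ * (C * ρ⁻¹)).trace).re := by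
          rw [Matrix.trace_mul_comm Cᴴ (C * ρ⁻¹)]
          congr 1
          simp only [Matrix.mul_assoc]
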